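/- Assume the pushforward measures of both f and g are atomless. Suppose that for μ⊗μ-almost every pair (x,x') ∈ X × X, f(x) ≤ f(x') implies g(x) ≤ g(x'). Then for every t ∈ [0,1] there exists t' ∈ [0,1] such that the threshold-t decision on f agrees μ-almost everywhere with the threshold-t' decision on g. -/

import Mathlib

open MeasureTheory

private lemma continuous_cdf_of_noAtoms (ν : Measure ℝ) [IsProbabilityMeasure ν]
    (hν : ∀ c : ℝ, ν {c} = 0) : Continuous (ProbabilityTheory.cdf ν) := by
  set F := ProbabilityTheory.cdf ν with hF
  have hmono : Monotone F := ProbabilityTheory.monotone_cdf ν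
  rw [continuous_iff_continuousAt]
  intro x
  rw [hmono.continuousAt_iff_leftLim_eq_rightLim]
  have hr : Function.rightLim F x = F x :=
    hmono.continuousWithinAt_Ioi_iff_rightLim_eq.mp
      ((F.right_continuous x).mono Set.Ioi_subset_Ici_self)
  have hl : Function.leftLim F x = F x := by
    have hmeas : F.measure {x} = 0 := by
      rw [ProbabilityTheory.measure_cdf ν]; exact hν x
    rw [StieltjesFunction.measure_singleton] at hmeas
    have h1 : F x - Function.leftLim F x ≤ 0 := by
      by_contra h
      push_neg at h
      rw [ENNReal.ofReal_eq_zero] at hmeas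
      linarith
    have h2 : Function.leftLim F x ≤ F x := hmono.leftLim_le le_rfl
    linarith
  rw [hl, hr]

/-- backward direction of Theorem 3.7.
If, for `μ⊗μ`-almost every pair, `f`-order implies `g`-order, then every
threshold decision on `f` agrees `μ`-a.e. with some threshold decision on `g`. -/
theorem comonotone_implies_threshold_decisions_agree
    {X : Type*} [MeasurableSpace X] (μ : Measure X) [IsProbabilityMeasure μ]
    (f g : X → ℝ) (hf : Measurable f) (hg : Measurable g)
    (hf01 : ∀ x, f x ∈ Set.Icc (0 : ℝ) 1) (hg01 : ∀ x, g x ∈ Set.Icc (0 : ℝ) 1)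
    (hfAtomless : ∀ c : ℝ, μ.map f {c} = 0) (hgAtomless : ∀ c : ℝ, μ.map g {c} = 0)
    (hmono : ∀ᵐ q ∂(μ.prod μ), f q.1 ≤ f q.2 → g q.1 ≤ g q.2) :
    ∀ t ∈ Set.Icc (0 : ℝ) 1, ∃ t' ∈ Set.Icc (0 : ℝ) 1,
      (fun x => if t < f x then (1 : ℝ) else 0) =ᵐ[μ]
        (fun x => if t' < g x then (1 : ℝ) else 0) := by
  intro t ht
  set ν : Measure ℝ := μ.map g with hν
  have : IsProbabilityMeasure ν := Measure.isProbabilityMeasure_map hg.aemeasurable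
  set F := ProbabilityTheory.cdf ν with hFdef
  have hFcont : Continuous F := continuous_cdf_of_noAtoms ν hgAtomless
  -- F 0 = 0
  have hF0 : F 0 = 0 := by
    have h1 : ν (Set.Iic 0) = 0 := by
      rw [hν, Measure.map_apply hg measurableSet_Iic]
      have hsub : g ⁻¹' (Set.Iic 0) ⊆ g ⁻¹' {0} := by
        intro x hx
        exact le_antisymm hx (hg01 x).1
      refine le_antisymm ?_ zero_le
      calc μ (g ⁻¹' (Set.Iic 0)) ≤ μ (g ⁻¹' {0}) := measure_mono hsub
        _ = 0 := by rw [← Measure.map_apply hg (measurableSet_singleton 0)]; exact hgAtomless 0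
    rw [ProbabilityTheory.cdf_eq_real, measureReal_def, h1, ENNReal.toReal_zero]
  -- F 1 = 1
  have hF1 : F 1 = 1 := by
    have h1 : ν (Set.Iic 1) = 1 := by
      rw [hν, Measure.map_apply hg measurableSet_Iic]
      have : g ⁻¹' (Set.Iic 1) = Set.univ := by
        ext x; simp [(hg01 x).2]
      rw [this, measure_univ]
    rw [ProbabilityTheory.cdf_eq_real, measureReal_def, h1, ENNReal.toReal_one]
  -- target value
  set p : ℝ := (μ {x | f x ≤ t}).toReal with hp
  have hple : μ {x | f x ≤ t} ≤ 1 := prob_le_one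
  have hpne : μ {x | f x ≤ t} ≠ ⊤ := measure_ne_top _ _
  have hp01 : p ∈ Set.Icc (0 : ℝ) 1 := by
    constructor
    · exact ENNReal.toReal_nonneg
    · rw [hp]
      exact ENNReal.toReal_le_of_le_ofReal zero_le_one (by simpa using hple)
  -- IVT
  have hsurj : Set.Icc (F 0) (F 1) ⊆ F '' Set.Icc 0 1 :=
    intermediate_value_Icc zero_le_one hFcont.continuousOn
  obtain ⟨t', ht', hFt'⟩ := hsurj (by rw [hF0, hF1]; exact hp01)
  refine ⟨t', ht', ?_⟩
  -- measure equality of lower sets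
  have hmeq : μ {x | g x ≤ t'} = μ {x | f x ≤ t} := by
    have h1 : ν (Set.Iic t') = μ {x | f x ≤ t} := by
      have := hFt'
      rw [ProbabilityTheory.cdf_eq_real, measureReal_def] at this
      have h2 : (ν (Set.Iic t')).toReal = (μ {x | f x ≤ t}).toReal := this
      exact (ENNReal.toReal_eq_toReal_iff' (measure_ne_top _ _) hpne).mp h2
    rw [← h1, hν, Measure.map_apply hg measurableSet_Iic]
    rfl
  -- sets
  set A : Set X := {x | t < f x} with hA
  set B : Set X := {x | t' < g x} with hB
  have hAm : MeasurableSet A := measurableSet_lt measurable_const hf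
  have hBm : MeasurableSet B := measurableSet_lt measurable_const hg
  have hAc : Aᶜ = {x | f x ≤ t} := by ext x; simp [hA, not_lt]
  have hBc : Bᶜ = {x | g x ≤ t'} := by ext x; simp [hB, not_lt]
  have hABeq : μ A = μ B := by
    have h1 : μ A = 1 - μ Aᶜ := by
      have := prob_compl_eq_one_sub (μ := μ) hAm.compl
      rwa [compl_compl] at this
    have h2 : μ B = 1 - μ Bᶜ := by
      have := prob_compl_eq_one_sub (μ := μ) hBm.compl
      rwa [compl_compl] at this
    rw [h1, h2, hAc, hBc, hmeq]
  -- symmetric differences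
  have hdiffeq : μ (A \ B) = μ (B \ A) := by
    have h1 : μ (A \ B) + μ (A ∩ B) = μ A := measure_diff_add_inter A hBm
    have h2 : μ (B \ A) + μ (B ∩ A) = μ B := measure_diff_add_inter B hAm
    have h3 : μ (A ∩ B) = μ (B ∩ A) := by rw [Set.inter_comm]
    have h4 : μ (A \ B) + μ (A ∩ B) = μ (B \ A) + μ (A ∩ B) := by
      rw [h1, h3] at *
      rw [hABeq, ← h2, h3]
    exact WithTop.add_right_cancel (measure_ne_top _ _) h4
  -- bad set is null
  have hbad : (μ.prod μ) {q : X × X | f q.1 ≤ f q.2 ∧ ¬ g q.1 ≤ g q.2} = 0 := by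
    have := hmono
    rw [ae_iff] at this
    convert this using 2
    ext q
    simp only [Set.mem_setOf_eq]
    tauto
  -- (B \ A) ×ˢ (A \ B) ⊆ bad set
  have hsub : (B \ A) ×ˢ (A \ B) ⊆ {q : X × X | f q.1 ≤ f q.2 ∧ ¬ g q.1 ≤ g q.2} := by
    rintro ⟨x, y⟩ ⟨⟨hxB, hxA⟩, ⟨hyA, hyB⟩⟩
    simp only [hA, hB, Set.mem_setOf_eq, not_lt] at hxB hxA hyA hyB
    constructor
    · linarith
    · push_neg
      linarith
  have hprodnull : μ (B \ A) * μ (A \ B) = 0 := by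
    have h1 : (μ.prod μ) ((B \ A) ×ˢ (A \ B)) = 0 :=
      le_antisymm (hbad ▸ measure_mono hsub) zero_le
    rwa [Measure.prod_prod] at h1
  have hnullA : μ (A \ B) = 0 := by
    rcases mul_eq_zero.mp hprodnull with h | h
    · rw [hdiffeq]; exact h
    · exact h
  have hnullB : μ (B \ A) = 0 := by rw [← hdiffeq]; exact hnullA
  -- conclude
  have hae : ∀ᵐ x ∂μ, x ∉ A \ B ∧ x ∉ B \ A := by
    filter_upwards [measure_eq_zero_iff_ae_notMem.mp hnullA, measure_eq_zero_iff_ae_notMem.mp hnullB]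
      with x h1 h2
    exact ⟨h1, h2⟩
  filter_upwards [hae] with x ⟨h1, h2⟩
  simp only [hA, hB, Set.mem_diff, Set.mem_setOf_eq, not_and, not_not, not_lt] at h1 h2
  by_cases hx : t < f x
  · have : t' < g x := by
      by_contra h
      push_neg at h
      have := h1 hx
      linarith
    simp [hx, this]
  · have : ¬ t' < g x := by
      intro h
      push_neg at hx
      have := h2 h
      linarith
    simp [hx, this]
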